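/- Let U be a symmetric unitary n×n complex matrix (U = Uᵀ, U*U = I). Then there exists a unitary matrix V with U = VᵀV (Takagi factorization). -/

import Mathlib

open Matrix Module.End

lemma sim_diag {n : ℕ} (A B : Matrix (Fin n) (Fin n) ℝ)
    (hA : A.transpose = A) (hB : B.transpose = B) (hAB : A * B = B * A) :
    ∃ O ∈ Matrix.unitaryGroup (Fin n) ℝ, ∃ dA dB : Fin n → ℝ,
      A * O = O * Matrix.diagonal dA ∧ B * O = O * Matrix.diagonal dB := by
  classical
  have hAh : A.IsHermitian := by
    rw [Matrix.IsHermitian, Matrix.conjTranspose]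
    ext i j
    simpa using congrFun (congrFun hA i) j
  have hBh : B.IsHermitian := by
    rw [Matrix.IsHermitian, Matrix.conjTranspose]
    ext i j
    simpa using congrFun (congrFun hB i) j
  have hAs : (Matrix.toEuclideanLin A).IsSymmetric :=
    Matrix.isHermitian_iff_isSymmetric.mp hAh
  have hBs : (Matrix.toEuclideanLin B).IsSymmetric :=
    Matrix.isHermitian_iff_isSymmetric.mp hBh
  have hcomm : Commute (Matrix.toEuclideanLin A) (Matrix.toEuclideanLin B) := by
    unfold Commute SemiconjBy
    ext v
    simp [Matrix.toEuclideanLin_apply, Matrix.mulVec_mulVec, ← hAB]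
  set V : ℝ × ℝ → Submodule ℝ (EuclideanSpace ℝ (Fin n)) := fun i =>
    (eigenspace (Matrix.toEuclideanLin A) i.2 ⊓ eigenspace (Matrix.toEuclideanLin B) i.1)
    with hV
  have internal0 : DirectSum.IsInternal V :=
    LinearMap.IsSymmetric.directSum_isInternal_of_commute hAs hBs hcomm
  have internal : DirectSum.IsInternal (fun i : {i // V i ≠ ⊥} => V i) :=
    DirectSum.isInternal_ne_bot_iff.mpr internal0
  haveI : Fintype {i // V i ≠ ⊥} :=
    internal0.submodule_iSupIndep.fintypeNeBotOfFiniteDimensional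
  have orth0 := LinearMap.IsSymmetric.orthogonalFamily_eigenspace_inf_eigenspace hAs hBs
  have orth : OrthogonalFamily ℝ (fun i : {i // V i ≠ ⊥} => V i)
      (fun i => (V i).subtypeₗᵢ) := orth0.comp Subtype.val_injective
  have hn : Module.finrank ℝ (EuclideanSpace ℝ (Fin n)) = n := finrank_euclideanSpace_fin
  let b := internal.subordinateOrthonormalBasis hn orth
  let μ : Fin n → ℝ × ℝ := fun a => (internal.subordinateOrthonormalBasisIndex hn a orth).1
  have hmem : ∀ a, b a ∈ (eigenspace (Matrix.toEuclideanLin A) (μ a).2 ⊓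
      eigenspace (Matrix.toEuclideanLin B) (μ a).1) :=
    fun a => internal.subordinateOrthonormalBasis_subordinate hn a orth
  have hAv : ∀ a, A *ᵥ ⇑(b a) = (μ a).2 • ⇑(b a) := by
    intro a
    have := mem_eigenspace_iff.mp (hmem a).1
    rw [Matrix.toEuclideanLin_apply] at this
    exact congrArg (WithLp.equiv 2 (Fin n → ℝ)) this
  have hBv : ∀ a, B *ᵥ ⇑(b a) = (μ a).1 • ⇑(b a) := by
    intro a
    have := mem_eigenspace_iff.mp (hmem a).2
    rw [Matrix.toEuclideanLin_apply] at this
    exact congrArg (WithLp.equiv 2 (Fin n → ℝ)) this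
  have hOapp : ∀ i j, ((EuclideanSpace.basisFun (Fin n) ℝ).toBasis.toMatrix b.toBasis) i j
      = b j i := fun i j => rfl
  refine ⟨(EuclideanSpace.basisFun (Fin n) ℝ).toBasis.toMatrix b.toBasis,
    (EuclideanSpace.basisFun (Fin n) ℝ).toMatrix_orthonormalBasis_mem_unitary b,
    fun a => (μ a).2, fun a => (μ a).1, ?_, ?_⟩
  · ext i j
    have h := congrFun (hAv j) i
    rw [Matrix.mul_diagonal]
    simp only [Matrix.mul_apply, hOapp]
    simpa [Matrix.mulVec, dotProduct, mul_comm] using h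
  · ext i j
    have h := congrFun (hBv j) i
    rw [Matrix.mul_diagonal]
    simp only [Matrix.mul_apply, hOapp]
    simpa [Matrix.mulVec, dotProduct, mul_comm] using h

theorem takagi_factorization_of_symmetric_unitary {n : ℕ}
    (U : Matrix (Fin n) (Fin n) ℂ)
    (hU : U ∈ Matrix.unitaryGroup (Fin n) ℂ)
    (hsym : U.transpose = U) :
    ∃ V ∈ Matrix.unitaryGroup (Fin n) ℂ, U = V.transpose * V := by
  classical
  set A : Matrix (Fin n) (Fin n) ℝ := fun i j => (U i j).re with hAdef
  set B : Matrix (Fin n) (Fin n) ℝ := fun i j => (U i j).im with hBdef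
  set Ac : Matrix (Fin n) (Fin n) ℂ := A.map Complex.ofReal with hAc
  set Bc : Matrix (Fin n) (Fin n) ℂ := B.map Complex.ofReal with hBc
  have huji : ∀ i j, U j i = U i j := fun i j => congrFun (congrFun hsym i) j
  have hu : U = Ac + Complex.I • Bc := by
    ext i j
    simp only [hAc, hBc, hAdef, hBdef, Matrix.add_apply, Matrix.smul_apply, Matrix.map_apply,
      smul_eq_mul]
    rw [mul_comm Complex.I]
    exact (Complex.re_add_im _).symm
  have hstar : star U = U.map (starRingEnd ℂ) := by
    ext i j
    simp [Matrix.star_apply, Matrix.map_apply, huji i j]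
  -- express Ac, Bc via U and star U
  have hAc' : Ac = (2 : ℂ)⁻¹ • (U + star U) := by
    ext i j
    rw [hstar]
    simp only [Matrix.smul_apply, Matrix.add_apply, Matrix.map_apply, hAc, hAdef,
      smul_eq_mul]
    rw [Complex.add_conj]
    push_cast
    ring
    rfl
  have hBc' : Bc = (2 * Complex.I)⁻¹ • (U - star U) := by
    ext i j
    rw [hstar]
    simp only [Matrix.smul_apply, Matrix.sub_apply, Matrix.map_apply, hBc, hBdef,
      smul_eq_mul]
    rw [Complex.sub_conj]
    have : (2 : ℂ) * Complex.I ≠ 0 := by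
      simp [Complex.I_ne_zero]
    field_simp
    push_cast
    ring
    rfl
  have hUs : U * star U = star U * U := by
    rw [Matrix.mem_unitaryGroup_iff.mp hU, Matrix.mem_unitaryGroup_iff'.mp hU]
  have hcommc : Ac * Bc = Bc * Ac := by
    rw [hAc', hBc', Matrix.smul_mul, Matrix.mul_smul, Matrix.smul_mul, Matrix.mul_smul,
      smul_smul, smul_smul]
    rw [mul_comm ((2:ℂ)⁻¹) ((2 * Complex.I)⁻¹)]
    congr 1
    simp only [add_mul, mul_add, sub_mul, mul_sub, hUs]
    abel
  have hcommr : A * B = B * A := by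
    have h2 : (A * B).map (Complex.ofRealHom : ℝ →+* ℂ) =
        (B * A).map (Complex.ofRealHom : ℝ →+* ℂ) := by
      rw [Matrix.map_mul, Matrix.map_mul]
      exact hcommc
    ext i j
    have := congrFun (congrFun h2 i) j
    simpa [Matrix.map_apply] using this
  have hAsym : A.transpose = A := by
    ext i j
    simp [Matrix.transpose_apply, hAdef, huji i j]
    exact congrArg Complex.re (huji i j)
  have hBsym : B.transpose = B := by
    ext i j
    simp [Matrix.transpose_apply, hBdef, huji i j]
    exact congrArg Complex.im (huji i j)
  obtain ⟨O, hO, dA, dB, hAO, hBO⟩ := sim_diag A B hAsym hBsym hcommr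
  set Oc : Matrix (Fin n) (Fin n) ℂ := O.map Complex.ofReal with hOc
  have hmapmul : ∀ X Y : Matrix (Fin n) (Fin n) ℝ,
      (X * Y).map (Complex.ofRealHom : ℝ →+* ℂ) =
        X.map Complex.ofReal * Y.map Complex.ofReal := fun X Y => Matrix.map_mul
  have hOcstar : star Oc = Oc.transpose := by
    ext i j
    simp [Matrix.star_apply, Matrix.transpose_apply, hOc, Matrix.map_apply]
  have hOcmem : Oc ∈ Matrix.unitaryGroup (Fin n) ℂ := by
    rw [Matrix.mem_unitaryGroup_iff]
    have h1 : O * star O = 1 := Matrix.mem_unitaryGroup_iff.mp hO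
    have hstarO : star O = O.transpose := by
      ext i j; simp [Matrix.star_apply, Matrix.transpose_apply]
    have : Oc * star Oc = (O * star O).map (Complex.ofRealHom : ℝ →+* ℂ) := by
      rw [hmapmul]
      congr 1
    rw [this, h1]
    simp
  -- diagonalize U
  set d : Fin n → ℂ := fun j => (dA j : ℂ) + Complex.I * (dB j) with hd
  have hUO : U * Oc = Oc * Matrix.diagonal d := by
    have hA1 : Ac * Oc = Oc * (Matrix.diagonal dA).map Complex.ofReal := by
      rw [hAc, hOc, ← hmapmul, ← hmapmul, hAO]
    have hB1 : Bc * Oc = Oc * (Matrix.diagonal dB).map Complex.ofReal := by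
      rw [hBc, hOc, ← hmapmul, ← hmapmul, hBO]
    have hdiagmap : ∀ v : Fin n → ℝ, (Matrix.diagonal v).map (Complex.ofReal) =
        Matrix.diagonal (fun j => (v j : ℂ)) := by
      intro v
      rw [Matrix.diagonal_map (by simp)]
    rw [hu, Matrix.add_mul, Matrix.smul_mul, hA1, hB1, hdiagmap, hdiagmap,
      ← Matrix.mul_smul, ← Matrix.mul_add]
    congr 1
    ext i j
    rcases eq_or_ne i j with rfl | h
    · simp [hd]
    · simp [Matrix.diagonal_apply_ne _ h, h]
  have hUdiag : U = Oc * Matrix.diagonal d * star Oc := by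
    calc U = U * (Oc * star Oc) := by
          rw [Matrix.mem_unitaryGroup_iff.mp hOcmem, Matrix.mul_one]
      _ = (U * Oc) * star Oc := by rw [Matrix.mul_assoc]
      _ = Oc * Matrix.diagonal d * star Oc := by rw [hUO]
  have hdmem : Matrix.diagonal d ∈ Matrix.unitaryGroup (Fin n) ℂ := by
    have h1 : star Oc * U * Oc = Matrix.diagonal d := by
      rw [Matrix.mul_assoc, hUO, ← Matrix.mul_assoc,
        Matrix.mem_unitaryGroup_iff'.mp hOcmem, Matrix.one_mul]
    rw [← h1]
    exact mul_mem (mul_mem (Unitary.star_mem hOcmem) hU) hOcmem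
  have hdunit : ∀ j, d j * (starRingEnd ℂ) (d j) = 1 := by
    intro j
    have h1 : Matrix.diagonal d * star (Matrix.diagonal d) = 1 :=
      Matrix.mem_unitaryGroup_iff.mp hdmem
    have h2 : star (Matrix.diagonal d) = Matrix.diagonal (fun j => (starRingEnd ℂ) (d j)) := by
      rw [Matrix.star_eq_conjTranspose, Matrix.diagonal_conjTranspose]
      rfl
    rw [h2, Matrix.diagonal_mul_diagonal] at h1
    have := congrFun (congrFun h1 j) j
    simpa using this
  -- choose square roots
  have hsq : ∀ j, ∃ e : ℂ, e ^ 2 = d j := fun j =>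
    IsAlgClosed.exists_pow_nat_eq (d j) zero_lt_two
  choose e he using hsq
  have heunit : ∀ j, e j * (starRingEnd ℂ) (e j) = 1 := by
    intro j
    have h1 : (Complex.normSq (e j) : ℂ) ^ 2 = 1 := by
      have : ((Complex.normSq (e j) : ℂ)) = e j * (starRingEnd ℂ) (e j) := by
        rw [Complex.mul_conj]
      rw [this]
      calc (e j * (starRingEnd ℂ) (e j)) ^ 2
          = (e j ^ 2) * (starRingEnd ℂ) (e j ^ 2) := by rw [map_pow]; ring
        _ = d j * (starRingEnd ℂ) (d j) := by rw [he]
        _ = 1 := hdunit j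
    have h2 : (Complex.normSq (e j)) ^ 2 = 1 := by
      exact_mod_cast h1
    have h3 : Complex.normSq (e j) = 1 := by
      nlinarith [Complex.normSq_nonneg (e j)]
    rw [Complex.mul_conj, h3]
    simp
  set E : Matrix (Fin n) (Fin n) ℂ := Matrix.diagonal e with hE
  have hEmem : E ∈ Matrix.unitaryGroup (Fin n) ℂ := by
    rw [Matrix.mem_unitaryGroup_iff]
    have h2 : star E = Matrix.diagonal (fun j => (starRingEnd ℂ) (e j)) := by
      rw [hE, Matrix.star_eq_conjTranspose, Matrix.diagonal_conjTranspose]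
      rfl
    rw [hE, h2, Matrix.diagonal_mul_diagonal]
    have : (fun i => e i * (starRingEnd ℂ) (e i)) = fun _ => (1 : ℂ) := by
      funext j
      exact heunit j
    rw [this]
    exact Matrix.diagonal_one
  refine ⟨E * star Oc, mul_mem hEmem (Unitary.star_mem hOcmem), ?_⟩
  have hVt : (E * star Oc).transpose = Oc * E := by
    rw [Matrix.transpose_mul, hOcstar, Matrix.transpose_transpose, hE,
      Matrix.diagonal_transpose]
  have hee : Matrix.diagonal e * Matrix.diagonal e = Matrix.diagonal d := by
    rw [Matrix.diagonal_mul_diagonal]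
    have h3 : (fun i => e i * e i) = d := by
      funext j
      rw [← he j]; ring
    rw [h3]
  rw [hVt, Matrix.mul_assoc, ← Matrix.mul_assoc E E, hE, hee, ← Matrix.mul_assoc, hUdiag]
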